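/- Let d_v, d_k ≥ 1 and let W_Q, W_K ∈ ℝ^{d_v×d_k} both have full rank (rank equal to min(d_v, d_k)). Define V := [ (W_Q ⊗ I_{d_v}) K_{d_k,d_v} , I_{d_v} ⊗ W_K ] ∈ ℝ^{d_v² × 2 d_v d_k} (horizontal concatenation of two d_v²×(d_v d_k) blocks). Then for every matrix U ∈ ℝ^{d_v²×d_v²}, rank(Vᵀ U V) ≤ 2 d_k d_v − d_k² if d_k < d_v, and rank(Vᵀ U V) ≤ d_v² if d_k ≥ d_v. In particular, the T-outer-product Hessian (1/d_k)·Vᵀ U V of the query–key block of self-attention obeys these rank bounds. -/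

import Mathlib

open Matrix
open scoped Kronecker

/-- The commutation matrix `K_{N,M} ∈ ℝ^{MN×MN}`, with rows indexed by pairs
`(n, m)` and columns by pairs `(m', n')`, defined by
`[K_{N,M}]_{(n,m),(m',n')} = δ_{n,n'} δ_{m,m'}`. -/
def commK (N M : ℕ) : Matrix (Fin N × Fin M) (Fin M × Fin N) ℝ :=
  Matrix.of fun p q => if p.1 = q.2 ∧ p.2 = q.1 then 1 else 0

lemma commK_mulVec (N M : ℕ) (w : Fin M × Fin N → ℝ) :
    commK N M *ᵥ w = fun p => w (p.2, p.1) := by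
  ext p
  simp [commK, Matrix.mulVec, dotProduct, Fintype.sum_prod_type, ite_and]

lemma commK_mulVecLin_surj (N M : ℕ) : Function.Surjective (commK N M).mulVecLin := by
  intro v
  exact ⟨fun q => v (q.2, q.1), by rw [Matrix.mulVecLin_apply, commK_mulVec]⟩

lemma exists_left_inv {m n : ℕ} (A : Matrix (Fin m) (Fin n) ℝ) (h : A.rank = n) :
    ∃ X : Matrix (Fin n) (Fin m) ℝ, X * A = 1 := by
  have hker : LinearMap.ker A.mulVecLin = ⊥ := by
    have h2 := LinearMap.finrank_range_add_finrank_ker A.mulVecLin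
    rw [Module.finrank_fintype_fun_eq_card] at h2
    have : Module.finrank ℝ (LinearMap.ker A.mulVecLin) = 0 := by
      have hr : A.rank = Module.finrank ℝ (LinearMap.range A.mulVecLin) := rfl
      simp only [Fintype.card_fin] at h2
      omega
    exact Submodule.finrank_eq_zero.1 this
  obtain ⟨g, hg⟩ := LinearMap.exists_leftInverse_of_injective A.mulVecLin hker
  refine ⟨LinearMap.toMatrix' g, ?_⟩
  have hA : A = LinearMap.toMatrix' A.mulVecLin := by
    rw [← Matrix.toLin'_apply', LinearMap.toMatrix'_toLin']
  rw [hA, ← LinearMap.toMatrix'_comp, hg, LinearMap.toMatrix'_id]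

lemma range_fromColumns {m n₁ n₂ : Type*} [Fintype m] [Fintype n₁] [Fintype n₂]
    (A : Matrix m n₁ ℝ) (B : Matrix m n₂ ℝ) :
    LinearMap.range (Matrix.fromCols A B).mulVecLin =
      LinearMap.range A.mulVecLin ⊔ LinearMap.range B.mulVecLin := by
  apply le_antisymm
  · rintro _ ⟨v, rfl⟩
    have hv : v = Sum.elim (v ∘ Sum.inl) (v ∘ Sum.inr) := by
      ext x; cases x <;> rfl
    rw [Matrix.mulVecLin_apply, hv, Matrix.fromCols_mulVec_sumElim]
    exact Submodule.add_mem_sup ⟨_, rfl⟩ ⟨_, rfl⟩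
  · apply sup_le
    · rintro _ ⟨v, rfl⟩
      exact ⟨Sum.elim v 0, by
        rw [Matrix.mulVecLin_apply, Matrix.fromCols_mulVec_sumElim]; simp⟩
    · rintro _ ⟨v, rfl⟩
      exact ⟨Sum.elim 0 v, by
        rw [Matrix.mulVecLin_apply, Matrix.fromCols_mulVec_sumElim]; simp⟩

/-- **Rank bound for the T-outer-product Hessian of the query–key block.**
Let `W_Q, W_K ∈ ℝ^{d_v×d_k}` have full rank and let
`V = [ (W_Q ⊗ I_{d_v}) K_{d_k,d_v} , I_{d_v} ⊗ W_K ] ∈ ℝ^{d_v² × 2 d_v d_k}`.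
Then for every `U ∈ ℝ^{d_v²×d_v²}`, `rank(Vᵀ U V) ≤ 2 d_k d_v − d_k²` if
`d_k < d_v`, and `rank(Vᵀ U V) ≤ d_v²` if `d_k ≥ d_v`. -/
theorem qk_outer_product_rank_bound (dv dk : ℕ) (hdv : 1 ≤ dv) (hdk : 1 ≤ dk)
    (WQ WK : Matrix (Fin dv) (Fin dk) ℝ)
    (hQ : WQ.rank = min dv dk) (hK : WK.rank = min dv dk)
    (V : Matrix (Fin dv × Fin dv) ((Fin dv × Fin dk) ⊕ (Fin dv × Fin dk)) ℝ)
    (hV : V = Matrix.fromCols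
      ((WQ ⊗ₖ (1 : Matrix (Fin dv) (Fin dv) ℝ)) * commK dk dv)
      ((1 : Matrix (Fin dv) (Fin dv) ℝ) ⊗ₖ WK)) :
    ∀ U : Matrix (Fin dv × Fin dv) (Fin dv × Fin dv) ℝ,
      (Vᵀ * U * V).rank ≤ if dk < dv then 2 * dk * dv - dk ^ 2 else dv ^ 2 := by
  intro U
  by_cases hlt : dk < dv
  · simp only [if_pos hlt]
    have hdkdv : dk ≤ dv := le_of_lt hlt
    have hmin : min dv dk = dk := min_eq_right hdkdv
    set A := (WQ ⊗ₖ (1 : Matrix (Fin dv) (Fin dv) ℝ)) with hA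
    set B := ((1 : Matrix (Fin dv) (Fin dv) ℝ) ⊗ₖ WK) with hB
    set S1 := LinearMap.range A.mulVecLin with hS1def
    set S2 := LinearMap.range B.mulVecLin with hS2def
    have hrange : LinearMap.range V.mulVecLin = S1 ⊔ S2 := by
      rw [hV, range_fromColumns]
      congr 1
      rw [Matrix.mulVecLin_mul]
      exact LinearMap.range_comp_of_range_eq_top _
        (LinearMap.range_eq_top.mpr (commK_mulVecLin_surj dk dv))
    have hstep1 : (Vᵀ * U * V).rank ≤ V.rank := Matrix.rank_mul_le_right _ _
    have hV2 : V.rank = Module.finrank ℝ (S1 ⊔ S2 : Submodule ℝ _) := by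
      have : V.rank = Module.finrank ℝ (LinearMap.range V.mulVecLin) := rfl
      rw [this, hrange]
    have hS1 : Module.finrank ℝ S1 ≤ dk * dv := by
      have h1 : A.rank ≤ Fintype.card (Fin dk × Fin dv) := Matrix.rank_le_card_width A
      simp only [Fintype.card_prod, Fintype.card_fin] at h1; exact h1
    have hS2 : Module.finrank ℝ S2 ≤ dv * dk := by
      have h1 : B.rank ≤ Fintype.card (Fin dv × Fin dk) := Matrix.rank_le_card_width B
      simp only [Fintype.card_prod, Fintype.card_fin] at h1; exact h1
    have hfact1 : WQ ⊗ₖ WK = A * ((1 : Matrix (Fin dk) (Fin dk) ℝ) ⊗ₖ WK) := by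
      rw [hA, ← Matrix.mul_kronecker_mul, Matrix.mul_one, Matrix.one_mul]
    have hfact2 : WQ ⊗ₖ WK = B * (WQ ⊗ₖ (1 : Matrix (Fin dk) (Fin dk) ℝ)) := by
      rw [hB, ← Matrix.mul_kronecker_mul, Matrix.mul_one, Matrix.one_mul]
    have hsub : LinearMap.range (WQ ⊗ₖ WK).mulVecLin ≤ S1 ⊓ S2 := by
      refine le_inf ?_ ?_
      · rw [hfact1, Matrix.mulVecLin_mul]
        exact LinearMap.range_comp_le_range _ _
      · rw [hfact2, Matrix.mulVecLin_mul]
        exact LinearMap.range_comp_le_range _ _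
    have hinf : dk * dk ≤ Module.finrank ℝ (S1 ⊓ S2 : Submodule ℝ _) := by
      have h1 : (WQ ⊗ₖ WK).rank ≤ Module.finrank ℝ (S1 ⊓ S2 : Submodule ℝ _) :=
        Submodule.finrank_mono hsub
      obtain ⟨X, hX⟩ := exists_left_inv WQ (by rw [hQ, hmin])
      obtain ⟨Y, hY⟩ := exists_left_inv WK (by rw [hK, hmin])
      have hone : (X ⊗ₖ Y) * (WQ ⊗ₖ WK) = 1 := by
        rw [← Matrix.mul_kronecker_mul, hX, hY, Matrix.one_kronecker_one]
      have h2 : dk * dk ≤ (WQ ⊗ₖ WK).rank := by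
        have h3 := Matrix.rank_mul_le_right (X ⊗ₖ Y) (WQ ⊗ₖ WK)
        rw [hone, Matrix.rank_one] at h3
        simpa using h3
      exact le_trans h2 h1
    have hsum := Submodule.finrank_sup_add_finrank_inf_eq S1 S2
    have hq : dk ^ 2 = dk * dk := sq dk
    have hm : 2 * dk * dv = 2 * (dk * dv) := by ring
    have hdd : dk * dk ≤ dk * dv := Nat.mul_le_mul_left dk hdkdv
    have hdd2 : dv * dk = dk * dv := Nat.mul_comm dv dk
    rw [hdd2] at hS2
    calc (Vᵀ * U * V).rank ≤ V.rank := hstep1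
      _ = Module.finrank ℝ (S1 ⊔ S2 : Submodule ℝ _) := hV2
      _ ≤ 2 * dk * dv - dk ^ 2 := by
          rw [hq, hm]
          generalize hp : dk * dv = p at *
          generalize hqq : dk * dk = q at *
          omega
  · simp only [if_neg hlt]
    have h1 : (Vᵀ * U * V).rank ≤ (Vᵀ * U).rank := Matrix.rank_mul_le_left _ _
    have h2 : (Vᵀ * U).rank ≤ dv * dv := by
      have := Matrix.rank_le_card_width (Vᵀ * U)
      simpa using this
    have : dv ^ 2 = dv * dv := sq dv
    omega
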